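/- Fix natural numbers n and a. Then the number of ordered pairs (p, q) of sequences p, q : {1,...,n} → {+1, −1} (with no restriction on the number of +1 entries) such that Σ_{i=1}^n |P_i − Q_i| = 2a, where P_i and Q_i are the partial sums of p and q, equals the number of step words r : {1,...,n} → {U, D, O1, O2} (bilateral Motzkin prefixes, with no condition on the final height) such that Σ_{i=1}^n |H_i| = a, where H_i is the sum of the weights of the first i steps of r with weights w(U)=1, w(D)=−1, w(O1)=w(O2)=0. Moreover, the number of such pairs additionally satisfying P_i ≤ Q_i for all i equals the number of such step words additionally satisfying H_i ≥ 0 for all i. -/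

import Mathlib

/-- The four kinds of steps: up, down, and two colors of horizontal steps. -/
inductive Step where
  | U : Step
  | D : Step
  | O1 : Step
  | O2 : Step
deriving DecidableEq

instance instFintypeStep : Fintype Step :=
  ⟨{Step.U, Step.D, Step.O1, Step.O2}, fun x => by cases x <;> simp⟩

/-- Weight of a step: U has weight 1, D has weight −1, O1 and O2 weight 0. -/
def Step.wt : Step → ℤ
  | .U => 1
  | .D => -1
  | .O1 => 0
  | .O2 => 0

/-- Height of a step word after its first `i` steps. -/
def stepHeight {n : ℕ} (r : Fin n → Step) (i : ℕ) : ℤ :=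
  ∑ j ∈ Finset.univ.filter (fun j : Fin n => (j : ℕ) < i), (r j).wt

/-- Partial sum of a `±1`-sequence after its first `i` entries. -/
def partialSum {n : ℕ} (p : Fin n → ℤ) (i : ℕ) : ℤ :=
  ∑ j ∈ Finset.univ.filter (fun j : Fin n => (j : ℕ) < i), p j

def stepOf (x y : ℤ) : Step :=
  if x = 1 then (if y = 1 then .O1 else .D) else (if y = 1 then .U else .O2)

def Step.fst : Step → ℤ
  | .U => -1 | .D => 1 | .O1 => 1 | .O2 => -1

def Step.snd : Step → ℤ
  | .U => 1 | .D => -1 | .O1 => 1 | .O2 => -1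

lemma stepOf_fst_snd (s : Step) : stepOf s.fst s.snd = s := by
  cases s <;> simp [stepOf, Step.fst, Step.snd]

lemma fst_stepOf {x y : ℤ} (hx : x = 1 ∨ x = -1) (hy : y = 1 ∨ y = -1) :
    (stepOf x y).fst = x := by
  rcases hx with h | h <;> rcases hy with h' | h' <;> simp [stepOf, h, h', Step.fst]

lemma snd_stepOf {x y : ℤ} (hx : x = 1 ∨ x = -1) (hy : y = 1 ∨ y = -1) :
    (stepOf x y).snd = y := by
  rcases hx with h | h <;> rcases hy with h' | h' <;> simp [stepOf, h, h', Step.snd]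

lemma fst_mem (s : Step) : s.fst = 1 ∨ s.fst = -1 := by cases s <;> simp [Step.fst]
lemma snd_mem (s : Step) : s.snd = 1 ∨ s.snd = -1 := by cases s <;> simp [Step.snd]

lemma two_wt (s : Step) : 2 * s.wt = s.snd - s.fst := by
  cases s <;> simp [Step.wt, Step.fst, Step.snd]

lemma height_eq {n : ℕ} (r : Fin n → Step) (i : ℕ) :
    2 * stepHeight r i
      = partialSum (fun j => (r j).snd) i - partialSum (fun j => (r j).fst) i := by
  unfold stepHeight partialSum
  rw [Finset.mul_sum, ← Finset.sum_sub_distrib]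
  exact Finset.sum_congr rfl fun j _ => two_wt (r j)

lemma key {n : ℕ} {p q : Fin n → ℤ} (hp : ∀ i, p i = 1 ∨ p i = -1)
    (hq : ∀ i, q i = 1 ∨ q i = -1) (i : ℕ) :
    partialSum q i - partialSum p i
      = 2 * stepHeight (fun j => stepOf (p j) (q j)) i := by
  rw [height_eq]
  have h1 : (fun j : Fin n => (stepOf (p j) (q j)).snd) = q :=
    funext fun j => snd_stepOf (hp j) (hq j)
  have h2 : (fun j : Fin n => (stepOf (p j) (q j)).fst) = p :=
    funext fun j => fst_stepOf (hp j) (hq j)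
  rw [h1, h2]

lemma abs_key {n : ℕ} {p q : Fin n → ℤ} (hp : ∀ i, p i = 1 ∨ p i = -1)
    (hq : ∀ i, q i = 1 ∨ q i = -1) (i : ℕ) :
    |partialSum p i - partialSum q i|
      = 2 * |stepHeight (fun j => stepOf (p j) (q j)) i| := by
  rw [abs_sub_comm, key hp hq, abs_mul]
  norm_num

lemma sum_iff {n a : ℕ} {p q : Fin n → ℤ} (hp : ∀ i, p i = 1 ∨ p i = -1)
    (hq : ∀ i, q i = 1 ∨ q i = -1) :
    ((∑ i ∈ Finset.range n, |partialSum p (i + 1) - partialSum q (i + 1)|) = 2 * (a : ℤ))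
      ↔ (∑ i ∈ Finset.range n,
          |stepHeight (fun j => stepOf (p j) (q j)) (i + 1)|) = (a : ℤ) := by
  have h : (∑ i ∈ Finset.range n, |partialSum p (i + 1) - partialSum q (i + 1)|)
      = 2 * ∑ i ∈ Finset.range n,
          |stepHeight (fun j => stepOf (p j) (q j)) (i + 1)| := by
    rw [Finset.mul_sum]
    exact Finset.sum_congr rfl fun i _ => abs_key hp hq (i + 1)
  rw [h]
  constructor
  · intro h'; exact mul_left_cancel₀ (by norm_num : (2 : ℤ) ≠ 0) h'
  · intro h'; rw [h']

lemma le_iff {n : ℕ} {p q : Fin n → ℤ} (hp : ∀ i, p i = 1 ∨ p i = -1)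
    (hq : ∀ i, q i = 1 ∨ q i = -1) (i : ℕ) :
    partialSum p i ≤ partialSum q i
      ↔ 0 ≤ stepHeight (fun j => stepOf (p j) (q j)) i := by
  rw [← sub_nonneg, key hp hq]
  constructor
  · intro h; nlinarith
  · intro h; nlinarith

/-- The bijection $A$ for prefixes: ordered pairs of $±1$-sequences of length
$n$ with $\sum_{i=1}^n |P_i - Q_i| = 2a$ are equinumerous with step words of
length $n$ with $\sum_{i=1}^n |H_i| = a$; moreover the nested pairs
($P_i ≤ Q_i$ for all $i$) are equinumerous with the step words staying weakly
above the axis. -/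
theorem card_pairs_eq_card_motzkinPrefixes (n a : ℕ) :
    (Nat.card {pq : (Fin n → ℤ) × (Fin n → ℤ) //
        (∀ i, pq.1 i = 1 ∨ pq.1 i = -1) ∧ (∀ i, pq.2 i = 1 ∨ pq.2 i = -1) ∧
        (∑ i ∈ Finset.range n, |partialSum pq.1 (i + 1) - partialSum pq.2 (i + 1)|)
          = 2 * (a : ℤ)}
      = Nat.card {r : Fin n → Step //
        (∑ i ∈ Finset.range n, |stepHeight r (i + 1)|) = (a : ℤ)})
    ∧
    (Nat.card {pq : (Fin n → ℤ) × (Fin n → ℤ) //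
        (∀ i, pq.1 i = 1 ∨ pq.1 i = -1) ∧ (∀ i, pq.2 i = 1 ∨ pq.2 i = -1) ∧
        (∀ i ∈ Finset.range n, partialSum pq.1 (i + 1) ≤ partialSum pq.2 (i + 1)) ∧
        (∑ i ∈ Finset.range n, |partialSum pq.1 (i + 1) - partialSum pq.2 (i + 1)|)
          = 2 * (a : ℤ)}
      = Nat.card {r : Fin n → Step //
        (∀ i ∈ Finset.range n, 0 ≤ stepHeight r (i + 1)) ∧
        (∑ i ∈ Finset.range n, |stepHeight r (i + 1)|) = (a : ℤ)}) := by
  constructor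
  · apply Nat.card_congr
    exact
      { toFun := fun x =>
          ⟨fun j => stepOf (x.1.1 j) (x.1.2 j), by
            obtain ⟨hp, hq, hsum⟩ := x.2
            exact (sum_iff hp hq).mp hsum⟩
        invFun := fun x =>
          ⟨(fun j => (x.1 j).fst, fun j => (x.1 j).snd), by
            refine ⟨fun j => fst_mem _, fun j => snd_mem _, ?_⟩
            rw [sum_iff (fun j => fst_mem _) (fun j => snd_mem _)]
            have : (fun j : Fin n => stepOf (x.1 j).fst (x.1 j).snd) = x.1 :=
              funext fun j => stepOf_fst_snd _
            rw [this]
            exact x.2⟩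
        left_inv := fun x => by
          obtain ⟨⟨p, q⟩, hp, hq, hsum⟩ := x
          ext j
          · exact fst_stepOf (hp j) (hq j)
          · exact snd_stepOf (hp j) (hq j)
        right_inv := fun x => by
          ext j
          exact congrFun (funext fun j => stepOf_fst_snd (x.1 j)) j }
  · apply Nat.card_congr
    exact
      { toFun := fun x =>
          ⟨fun j => stepOf (x.1.1 j) (x.1.2 j), by
            obtain ⟨hp, hq, hle, hsum⟩ := x.2
            refine ⟨fun i hi => (le_iff hp hq (i + 1)).mp (hle i hi), ?_⟩
            exact (sum_iff hp hq).mp hsum⟩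
        invFun := fun x =>
          ⟨(fun j => (x.1 j).fst, fun j => (x.1 j).snd), by
            have hmap : (fun j : Fin n => stepOf (x.1 j).fst (x.1 j).snd) = x.1 :=
              funext fun j => stepOf_fst_snd _
            refine ⟨fun j => fst_mem _, fun j => snd_mem _, ?_, ?_⟩
            · intro i hi
              rw [le_iff (fun j => fst_mem _) (fun j => snd_mem _), hmap]
              exact x.2.1 i hi
            · rw [sum_iff (fun j => fst_mem _) (fun j => snd_mem _), hmap]
              exact x.2.2⟩
        left_inv := fun x => by
          obtain ⟨⟨p, q⟩, hp, hq, hle, hsum⟩ := x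
          ext j
          · exact fst_stepOf (hp j) (hq j)
          · exact snd_stepOf (hp j) (hq j)
        right_inv := fun x => by
          ext j
          exact congrFun (funext fun j => stepOf_fst_snd (x.1 j)) j }
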